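/- For every real number x with 0 < |x| < π, the series \(\sum_{n\ge 0} (-1)^n B_{2n} (2x)^{2n}/(2n)!\) converges and its sum equals \(x\cot(x)\). -/

import Mathlib

open Real
open Finset in
lemma bern_coeff_key (n : ℕ) :
    ∑ p ∈ Finset.HasAntidiagonal.antidiagonal n, ((bernoulli p.1 : ℚ) / p.1.factorial) *
      (if p.2 = 0 then 0 else (1 : ℚ) / p.2.factorial) = if n = 1 then 1 else 0 := by
  have h := congrArg (PowerSeries.coeff n) (bernoulliPowerSeries_mul_exp_sub_one ℚ)
  rw [PowerSeries.coeff_mul, PowerSeries.coeff_X] at h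
  rw [← h]
  refine Finset.sum_congr rfl fun p _ => ?_
  rw [bernoulliPowerSeries, PowerSeries.coeff_mk, map_sub, PowerSeries.coeff_exp,
    PowerSeries.coeff_one]
  simp only [Algebra.algebraMap_self, RingHom.id_apply]
  rcases eq_or_ne p.2 0 with h2 | h2 <;> simp [h2, Nat.factorial]

lemma bern_abs_le {k : ℕ} (hk : k ≠ 0) :
    |(bernoulli (2 * k) : ℝ)| / (2 * k).factorial ≤ (π ^ 2 / 3) / (2 * π) ^ (2 * k) := by
  have h1 := hasSum_zeta_nat hk
  have h2 := hasSum_zeta_nat one_ne_zero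
  set S : ℝ := (-1 : ℝ) ^ (k + 1) * (2 : ℝ) ^ (2 * k - 1) * π ^ (2 * k) *
      bernoulli (2 * k) / (2 * k).factorial with hSdef
  have hS : (0:ℝ) ≤ S := h1.nonneg fun n => by positivity
  have hle : S ≤ π ^ 2 / 6 := by
    have := hasSum_le (f := fun n : ℕ => 1 / (n:ℝ) ^ (2*k)) (g := fun n : ℕ => 1 / (n:ℝ) ^ (2*1))
      (fun n => ?_) h1 h2
    · refine this.trans (le_of_eq ?_)
      rw [mul_one]
      rw [bernoulli_eq_bernoulli'_of_ne_one (by decide : 2 ≠ 1), bernoulli'_two]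
      norm_num [Nat.factorial]
      ring
    · rcases Nat.eq_zero_or_pos n with rfl | hn
      · show (1:ℝ) / (0:ℕ) ^ (2*k) ≤ 1 / (0:ℕ) ^ (2*1)
        rw [Nat.cast_zero, zero_pow (by omega : 2 * k ≠ 0), zero_pow (by omega : 2 * 1 ≠ 0)]
      · apply one_div_le_one_div_of_le (by positivity)
        exact pow_le_pow_right₀ (by exact_mod_cast hn) (by omega)
  have habs : (2:ℝ) ^ (2 * k - 1) * π ^ (2 * k) *
      (|(bernoulli (2 * k) : ℝ)| / (2 * k).factorial) = S := by
    rw [(abs_of_nonneg hS).symm, hSdef]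
    simp [abs_mul, abs_div, abs_pow, abs_of_pos pi_pos, Nat.abs_cast]
    ring
  have h2k : (2:ℝ) ^ (2*k - 1) = 2 ^ (2*k) / 2 := by
    rw [eq_div_iff (two_ne_zero' ℝ), ← pow_succ]
    congr 1; omega
  rw [div_le_div_iff₀ (by positivity) (by positivity)]
  calc |(bernoulli (2 * k) : ℝ)| * (2*π)^(2*k)
      = 2 * ((2:ℝ) ^ (2 * k - 1) * π ^ (2 * k) *
          (|(bernoulli (2 * k) : ℝ)| / (2 * k).factorial)) * (2 * k).factorial := by
        rw [mul_pow, h2k]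
        field_simp
    _ = 2 * S * (2 * k).factorial := by rw [habs]
    _ ≤ 2 * (π^2/6) * (2 * k).factorial := by
        have : (0:ℝ) < (2*k).factorial := by positivity
        nlinarith
    _ ≤ π^2/3 * (2 * k).factorial := by apply le_of_eq; ring

lemma summable_norm_bern {z : ℂ} (hz : ‖z‖ < 2 * π)
    (hb : ∀ k : ℕ, k ≠ 0 → |(bernoulli (2 * k) : ℝ)| / (2 * k).factorial
        ≤ (π ^ 2 / 3) / (2 * π) ^ (2 * k)) :
    Summable (fun n : ℕ => ‖(bernoulli n : ℂ) * z ^ n / n.factorial‖) := by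
  set r : ℝ := ‖z‖ / (2 * π) with hrdef
  have hr0 : 0 ≤ r := by positivity
  have hr1 : r < 1 := (div_lt_one (by positivity)).2 hz
  have hgs : Summable (fun n : ℕ => (π ^ 2 / 3) * r ^ n + if n = 1 then ‖z‖ / 2 else 0) := by
    exact ((summable_geometric_of_lt_one hr0 hr1).mul_left _).add
      (hasSum_ite_eq 1 (‖z‖ / 2)).summable
  refine Summable.of_nonneg_of_le (fun n => norm_nonneg _) (fun n => ?_) hgs
  have hnorm : ‖(bernoulli n : ℂ) * z ^ n / n.factorial‖ =
      |(bernoulli n : ℝ)| / n.factorial * ‖z‖ ^ n := by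
    rw [norm_div, norm_mul, norm_pow, RCLike.norm_natCast,
      show ((bernoulli n : ℚ) : ℂ) = (((bernoulli n : ℚ) : ℝ) : ℂ) by push_cast; ring,
      Complex.norm_real, Real.norm_eq_abs]
    ring
  rw [hnorm]
  rcases Nat.even_or_odd n with ⟨k, hk⟩ | hodd
  · rcases Nat.eq_zero_or_pos k with rfl | hkpos
    · subst hk
      norm_num [bernoulli_zero]
      nlinarith [pi_gt_three]
    · have hn : n = 2 * k := by omega
      subst hn
      have := hb k (by omega)
      have hle : |(bernoulli (2*k) : ℝ)| / (2*k).factorial * ‖z‖ ^ (2*k)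
          ≤ (π ^ 2 / 3) / (2 * π) ^ (2 * k) * ‖z‖ ^ (2*k) := by
        apply mul_le_mul_of_nonneg_right this (by positivity)
      refine hle.trans ?_
      have : (π ^ 2 / 3) / (2 * π) ^ (2 * k) * ‖z‖ ^ (2*k) = (π ^ 2 / 3) * r ^ (2*k) := by
        rw [hrdef, div_pow]; ring
      rw [this]
      have h0 : (0:ℝ) ≤ (if 2*k = 1 then ‖z‖ / 2 else 0) := by
        split <;> positivity
      linarith
  · rcases eq_or_ne n 1 with rfl | hn1
    · simp only [if_pos rfl, bernoulli_one, pow_one, Nat.factorial_one, Nat.cast_one, div_one]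
      have he : |((-1/2 : ℚ) : ℝ)| / 1 * ‖z‖ = ‖z‖ / 2 := by
        push_cast
        rw [abs_div, abs_neg, abs_one, abs_two]
        ring
      have : (0:ℝ) ≤ π^2/3 * r ^ 1 := by positivity
      push_cast at he ⊢
      rw [div_one] at he
      rw [he]
      linarith
    · have : bernoulli n = 0 := by
        rw [bernoulli_eq_bernoulli'_of_ne_one hn1]
        exact bernoulli'_eq_zero_of_odd hodd (by rcases hodd with ⟨m, hm⟩; omega)
      rw [this]
      simp only [Rat.cast_zero, abs_zero, zero_div, zero_mul]
      rcases eq_or_ne n 1 with h | h <;> simp [h] <;> positivity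

lemma hasSum_bernoulli_egf {z : ℂ} (hz : ‖z‖ < 2 * π) (hz1 : Complex.exp z ≠ 1) :
    HasSum (fun n : ℕ => (bernoulli n : ℂ) * z ^ n / n.factorial)
      (z / (Complex.exp z - 1)) := by
  set a : ℕ → ℂ := fun n => (bernoulli n : ℂ) * z ^ n / n.factorial with hadef
  have hAnorm : Summable (fun n => ‖a n‖) := summable_norm_bern hz (fun k hk => bern_abs_le hk)
  have hA : Summable a := hAnorm.of_norm
  set b : ℕ → ℂ := fun n => if n = 0 then 0 else z ^ n / n.factorial with hbdef
  have hexp : HasSum (fun n : ℕ => z ^ n / n.factorial) (Complex.exp z) := by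
    rw [Complex.exp_eq_exp_ℂ]
    exact NormedSpace.expSeries_div_hasSum_exp z
  have hB : HasSum b (Complex.exp z - 1) := by
    have h := hexp.update 0 0
    have he : Function.update (fun n : ℕ => z ^ n / n.factorial) 0 0 = b := by
      funext n
      rcases eq_or_ne n 0 with rfl | hn
      · simp [hbdef]
      · simp [hbdef, hn, Function.update_of_ne hn]
    rw [he] at h
    have : (0:ℂ) - z ^ 0 / (Nat.factorial 0) + Complex.exp z = Complex.exp z - 1 := by
      simp; ring
    rwa [this] at h
  have hBnorm : Summable (fun n => ‖b n‖) := by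
    refine Summable.of_nonneg_of_le (fun n => norm_nonneg _)
      (fun n => ?_) (Real.summable_pow_div_factorial ‖z‖)
    rcases eq_or_ne n 0 with rfl | hn
    · simp [hbdef]
    · simp only [hbdef, if_neg hn, norm_div, norm_pow, RCLike.norm_natCast]
      exact le_refl _
  -- Cauchy product
  have hcauchy := tsum_mul_tsum_eq_tsum_sum_antidiagonal_of_summable_norm hAnorm hBnorm
  have hcoeff : ∀ n : ℕ, (∑ kl ∈ Finset.HasAntidiagonal.antidiagonal n, a kl.1 * b kl.2) =
      if n = 1 then z else 0 := by
    intro n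
    have key := bern_coeff_key n
    have : (∑ kl ∈ Finset.HasAntidiagonal.antidiagonal n, a kl.1 * b kl.2) =
        (((∑ p ∈ Finset.HasAntidiagonal.antidiagonal n, ((bernoulli p.1 : ℚ) / p.1.factorial) *
          (if p.2 = 0 then 0 else (1 : ℚ) / p.2.factorial)) : ℚ) : ℂ) * z ^ n := by
      push_cast
      rw [Finset.sum_mul]
      refine Finset.sum_congr rfl fun p hp => ?_
      rw [Finset.HasAntidiagonal.mem_antidiagonal] at hp
      rcases eq_or_ne p.2 0 with h2 | h2
      · simp [hadef, hbdef, h2]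
      · simp only [hadef, hbdef, if_neg h2]
        rw [← hp, pow_add]
        push_cast
        field_simp
    rw [this, key]
    rcases eq_or_ne n 1 with rfl | hn
    · simp
    · simp [hn]
  rw [funext hcoeff] at hcauchy
  have htsum : (∑' n : ℕ, if n = 1 then z else (0:ℂ)) = z := (hasSum_ite_eq 1 z).tsum_eq
  rw [htsum, hB.tsum_eq] at hcauchy
  -- hcauchy : (∑' n, a n) * (exp z - 1) = z
  have hne : Complex.exp z - 1 ≠ 0 := sub_ne_zero.mpr hz1
  have : (∑' n, a n) = z / (Complex.exp z - 1) := by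
    field_simp
    linear_combination hcauchy
  exact this ▸ hA.hasSum

theorem hasSum_bernoulli_cot (x : ℝ) (hx : 0 < |x|) (hx' : |x| < π) :
    HasSum
      (fun n : ℕ =>
        (-1 : ℝ) ^ n * (bernoulli (2 * n) : ℝ) * (2 * x) ^ (2 * n) / (Nat.factorial (2 * n) : ℝ))
      (x * Real.cot x) := by
  set z : ℂ := (2 * x : ℝ) * Complex.I with hzdef
  have hznorm : ‖z‖ < 2 * π := by
    rw [hzdef, norm_mul, Complex.norm_real, Complex.norm_I, mul_one, Real.norm_eq_abs, abs_mul,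
      abs_two]
    linarith
  have hexpne : Complex.exp z ≠ 1 := by
    rw [Ne, Complex.exp_eq_one_iff]
    rintro ⟨n, hn⟩
    rw [hzdef] at hn
    have h2 : ((2 * x : ℝ) : ℂ) = (((n : ℝ) * (2 * π) : ℝ) : ℂ) := by
      apply mul_right_cancel₀ Complex.I_ne_zero
      push_cast at hn ⊢
      linear_combination hn
    have h2' : (2 * x : ℝ) = (n : ℝ) * (2 * π) := by exact_mod_cast h2
    have hxn : x = n * π := by linarith
    rcases eq_or_ne n 0 with rfl | hn0
    · rw [hxn] at hx
      simp at hx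
    · have h1 : (1:ℝ) ≤ |(n:ℝ)| := by exact_mod_cast Int.one_le_abs hn0
      have habs : |x| = |(n:ℝ)| * π := by rw [hxn, abs_mul, abs_of_pos pi_pos]
      nlinarith [pi_pos]
  have hmain := hasSum_bernoulli_egf hznorm hexpne
  set a : ℕ → ℂ := fun n => (bernoulli n : ℂ) * z ^ n / n.factorial with hadef
  have ha1 : a 1 = -(x : ℂ) * Complex.I := by
    simp only [hadef, pow_one, Nat.factorial_one, Nat.cast_one, div_one, bernoulli_one, hzdef]
    push_cast
    ring
  -- update at 1
  have hupd := hmain.update 1 0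
  set T : ℂ := z / (Complex.exp z - 1) with hTdef
  have hupd' : HasSum (Function.update a 1 0) (T + (x : ℂ) * Complex.I) := by
    have : (0:ℂ) - a 1 + T = T + (x : ℂ) * Complex.I := by rw [ha1]; ring
    rwa [this] at hupd
  -- restrict to evens
  have hinj : Function.Injective (fun k : ℕ => 2 * k) := fun a b h =>
    Nat.eq_of_mul_eq_mul_left two_pos h
  have hsupp : ∀ m, m ∉ Set.range (fun k : ℕ => 2 * k) → Function.update a 1 0 m = 0 := by
    intro m hm
    have hodd : Odd m := by
      rcases Nat.even_or_odd m with ⟨k, hk⟩ | h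
      · exact absurd ⟨k, show 2 * k = m by omega⟩ hm
      · exact h
    rcases eq_or_ne m 1 with rfl | hm1
    · simp
    · rw [Function.update_of_ne hm1]
      have : bernoulli m = 0 := by
        rw [bernoulli_eq_bernoulli'_of_ne_one hm1]
        exact bernoulli'_eq_zero_of_odd hodd (by rcases hodd with ⟨j, hj⟩; omega)
      simp [hadef, this]
  have heven := (hinj.hasSum_iff hsupp).mpr hupd'
  -- identify terms
  have hterm : ∀ k : ℕ, (Function.update a 1 0 ∘ fun k : ℕ => 2 * k) k =
      (((-1 : ℝ) ^ k * (bernoulli (2 * k) : ℝ) * (2 * x) ^ (2 * k) /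
        (Nat.factorial (2 * k) : ℝ) : ℝ) : ℂ) := by
    intro k
    have h2k : 2 * k ≠ 1 := by omega
    simp only [Function.comp_apply, Function.update_of_ne h2k, hadef]
    have hzpow : z ^ (2 * k) = (((-1:ℝ) ^ k * (2*x) ^ (2*k) : ℝ) : ℂ) := by
      rw [hzdef, mul_pow,
        show Complex.I ^ (2 * k) = ((-1:ℂ)) ^ k by rw [pow_mul, Complex.I_sq]]
      push_cast
      ring
    rw [hzpow]
    push_cast
    ring
  rw [funext hterm] at heven
  -- identify value
  have hval : T + (x : ℂ) * Complex.I = ((x * Real.cot x : ℝ) : ℂ) := by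
    have hw : Complex.exp z ≠ 1 := hexpne
    have hne : Complex.exp z - 1 ≠ 0 := sub_ne_zero.mpr hw
    have hne' : 1 - Complex.exp z ≠ 0 := fun h => hw (by linear_combination -h)
    have hzexp : Complex.exp (2 * Complex.I * (x:ℂ)) = Complex.exp z := by
      rw [hzdef]; congr 1; push_cast; ring
    rw [Complex.ofReal_mul, Complex.ofReal_cot, Complex.cot_eq_exp_ratio, hzexp, hTdef, hzdef]
    set w : ℂ := Complex.exp z with hwdef
    field_simp [hne, hne']
    push_cast
    linear_combination ((x:ℂ) * (w + 1) * (1 - w)) * Complex.I_sq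
  rw [hval] at heven
  exact (Complex.hasSum_ofReal).mp heven
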